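/- Assume every hospital's preference is substitutable and let φ̄ be the doctor-optimal rule. Then for every doctor d, every preference P_d and every preference P'_d, the P_d-worst element of d's option set under truth-telling is weakly P_d-preferred to the P_d-worst element of d's option set under the report P'_d: W_d(P_d, O^{φ̄}(P_d)) R_d W_d(P_d, O^{φ̄}(P'_d)). -/

import Mathlib

set_option linter.unusedSectionVars false

namespace Matching

open Finset

/-- A many-to-one matching market with contracts: each contract `x` involves exactly one
doctor `xD x` and one hospital `xH x`; each hospital `h` has a fixed antisymmetric,
transitive and complete preference `prH h`, modelled as a linear order on sets of
contracts (only its comparisons between allocations of contracts involving `h` matter). -/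
structure Market (D H X : Type*) where
  xD : X → D
  xH : X → H
  prH : H → LinearOrder (Finset X)

/-- A doctor's preference: an antisymmetric, transitive and complete preference, modelled
as a linear order on sets of contracts (only comparisons between `∅` and singletons of
contracts involving the doctor matter). -/
abbrev Pref (X : Type*) := LinearOrder (Finset X)

/-- A profile of doctors' preferences. -/
abbrev Profile (D X : Type*) := D → Pref X

variable {D H X : Type*}
variable [DecidableEq D] [DecidableEq H] [DecidableEq X] [Fintype D] [Fintype H] [Fintype X]

/-- `Y_d` : the contracts in `Y` involving doctor `d`. -/
def docPart (M : Market D H X) (Y : Finset X) (d : D) : Finset X :=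
  Y.filter fun x => M.xD x = d

/-- `Y_h` : the contracts in `Y` involving hospital `h`. -/
def hospPart (M : Market D H X) (Y : Finset X) (h : H) : Finset X :=
  Y.filter fun x => M.xH x = h

/-- An allocation: distinct contracts involve distinct doctors. -/
def IsAllocation (M : Market D H X) (Z : Finset X) : Prop :=
  ∀ x ∈ Z, ∀ y ∈ Z, M.xD x = M.xD y → x = y

/-- `A(Y)` : the allocations contained in `Y`. -/
def allocs (M : Market D H X) (Y : Finset X) : Finset (Finset X) :=
  Y.powerset.filter fun Z => ∀ x ∈ Z, ∀ y ∈ Z, M.xD x = M.xD y → x = y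

lemma empty_mem_allocs (M : Market D H X) (Y : Finset X) : ∅ ∈ allocs M Y := by
  simp [allocs]

/-- The best allocation contained in `Y` according to the linear order `pr`. -/
def bestAlloc (M : Market D H X) (pr : Pref X) (Y : Finset X) : Finset X :=
  @Finset.max' _ pr (allocs M Y) ⟨∅, empty_mem_allocs M Y⟩

/-- `C_h(Y)` : hospital `h`'s choice set from `Y` (the `≻_h`-maximum of `A(Y_h)`). -/
def Ch (M : Market D H X) (h : H) (Y : Finset X) : Finset X :=
  bestAlloc M (M.prH h) (hospPart M Y h)

/-- `C_d(P_d, Y)` : doctor `d`'s choice set from `Y` (the `P_d`-maximum of `A(Y_d)`). -/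
def Cd (M : Market D H X) (Pd : Pref X) (d : D) (Y : Finset X) : Finset X :=
  bestAlloc M Pd (docPart M Y d)

/-- `C_H(Y) = ∪_{h ∈ H} C_h(Y)`. -/
def CH (M : Market D H X) (Y : Finset X) : Finset X :=
  univ.biUnion fun h => Ch M h Y

/-- `C_D(Y) = ∪_{d ∈ D} C_d(Y)`. -/
def CD (M : Market D H X) (P : Profile D X) (Y : Finset X) : Finset X :=
  univ.biUnion fun d => Cd M (P d) d Y

/-- Substitutability of hospital `h`'s preference: `x ∈ C_h(W)` and `x ∈ Y_h ⊆ W_h`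
imply `x ∈ C_h(Y)`. -/
def Substitutable (M : Market D H X) (h : H) : Prop :=
  ∀ W Y : Finset X, hospPart M Y h ⊆ hospPart M W h →
    ∀ x ∈ hospPart M Y h, x ∈ Ch M h W → x ∈ Ch M h Y

/-- The sets `X^t` of still-available contracts in the doctor-proposing deferred
acceptance algorithm (0-based: index `t` corresponds to iteration `t+1`). -/
def DDAsets (M : Market D H X) (P : Profile D X) : ℕ → Finset X
  | 0 => univ
  | t + 1 =>
      DDAsets M P t \ (CD M P (DDAsets M P t) \ CH M (CD M P (DDAsets M P t)))

/-- `O^t` : the offers made by the doctors at iteration `t` of D-DA (0-based). -/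
def offers (M : Market D H X) (P : Profile D X) (t : ℕ) : Finset X :=
  CD M P (DDAsets M P t)

/-- `O_A^t = ∪_{k ≤ t} O^k` : the accumulated offers up to iteration `t` (0-based). -/
def accOffers (M : Market D H X) (P : Profile D X) (t : ℕ) : Finset X :=
  (Finset.range (t + 1)).biUnion fun k => offers M P k

/-- D-DA has stopped at iteration `t`: all offers are accepted. -/
def DDAstopped (M : Market D H X) (P : Profile D X) (t : ℕ) : Prop :=
  CH M (offers M P t) = offers M P t

/-- The (0-based) last iteration of D-DA, i.e. `T - 1` where `T` is the number of
iterations of D-DA. -/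
noncomputable def DDAlast (M : Market D H X) (P : Profile D X) : ℕ :=
  sInf {t | DDAstopped M P t}

/-- The output of D-DA (the algorithm provably stops by iteration `Fintype.card X`,
and once stopped the offer sets stay constant). -/
def DDAoutput (M : Market D H X) (P : Profile D X) : Finset X :=
  CH M (offers M P (Fintype.card X))

/-- The doctor-optimal rule `φ̄`, giving doctor `d`'s outcome `φ̄_d(P)` (an element of
`A(𝐗_d)`, i.e. `∅` or a singleton). -/
def docOpt (M : Market D H X) (P : Profile D X) (d : D) : Finset X :=
  docPart M (DDAoutput M P) d

/-- The sets `X^t` of still-available contracts in the hospital-proposing deferred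
acceptance algorithm (0-based). -/
def HDAsets (M : Market D H X) (P : Profile D X) : ℕ → Finset X
  | 0 => univ
  | t + 1 =>
      HDAsets M P t \ (CH M (HDAsets M P t) \ CD M P (CH M (HDAsets M P t)))

/-- The offers made by the hospitals at iteration `t` of H-DA (0-based). -/
def hOffers (M : Market D H X) (P : Profile D X) (t : ℕ) : Finset X :=
  CH M (HDAsets M P t)

/-- The output of H-DA. -/
def HDAoutput (M : Market D H X) (P : Profile D X) : Finset X :=
  CD M P (hOffers M P (Fintype.card X))

/-- The hospital-optimal rule `φ̲`, giving doctor `d`'s outcome `φ̲_d(P)`. -/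
def hospOpt (M : Market D H X) (P : Profile D X) (d : D) : Finset X :=
  docPart M (HDAoutput M P) d

/-- The option set `O^φ(P_d)` left open by `P_d` at the rule `φ`. -/
def optionSet (rule : Profile D X → D → Finset X) (d : D) (Pd : Pref X) :
    Set (Finset X) :=
  {S | ∃ P : Profile D X, P d = Pd ∧ S = rule P d}

open scoped Classical in
/-- `W_d(pr, S)` : the `pr`-worst element of the (finite) set `S` of outcomes. -/
noncomputable def worstIn (pr : Pref X) (S : Set (Finset X)) : Finset X :=
  if h : S.Nonempty then
    @Finset.min' _ pr (Set.toFinite S).toFinset ((Set.Finite.toFinset_nonempty _).mpr h)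
  else ∅

open scoped Classical in
/-- The `pr`-best element of the (finite) set `S` of outcomes. -/
noncomputable def bestIn (pr : Pref X) (S : Set (Finset X)) : Finset X :=
  if h : S.Nonempty then
    @Finset.max' _ pr (Set.toFinite S).toFinset ((Set.Finite.toFinset_nonempty _).mpr h)
  else ∅

/-- `P'_d` is a manipulation of the rule at `P_d` : for some subprofile of the other
doctors, reporting `P'_d` gives a strictly `P_d`-better outcome than truth-telling. -/
def IsManip (rule : Profile D X → D → Finset X) (d : D) (Pd P'd : Pref X) : Prop :=
  ∃ P : Profile D X, P d = Pd ∧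
    Pd.lt (rule P d) (rule (Function.update P d P'd) d)

/-- `P'_d` is an obvious manipulation of the rule at `P_d`. -/
def IsObviousManip (rule : Profile D X → D → Finset X) (d : D) (Pd P'd : Pref X) :
    Prop :=
  IsManip rule d Pd P'd ∧
    (Pd.lt (worstIn Pd (optionSet rule d Pd)) (worstIn Pd (optionSet rule d P'd)) ∨
     Pd.lt (bestIn Pd (optionSet rule d Pd)) (bestIn Pd (optionSet rule d P'd)))

/-- A rule is not obviously manipulable (NOM). -/
def NOM (rule : Profile D X → D → Finset X) : Prop :=
  ∀ (d : D) (Pd P'd : Pref X), ¬ IsObviousManip rule d Pd P'd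

/-- A rule is obviously manipulable (OM). -/
def OM (rule : Profile D X → D → Finset X) : Prop :=
  ∃ (d : D) (Pd P'd : Pref X), IsObviousManip rule d Pd P'd

/-- `Y` is a stable allocation at the profile `P` : it is an individually rational
allocation and admits no blocking contract. -/
def IsStable (M : Market D H X) (P : Profile D X) (Y : Finset X) : Prop :=
  IsAllocation M Y ∧ CD M P Y = Y ∧ CH M Y = Y ∧
    ∀ x : X, x ∉ Y →
      ¬ (x ∈ Cd M (P (M.xD x)) (M.xD x) (insert x Y) ∧
         x ∈ Ch M (M.xH x) (insert x Y))

/-- `⌈kq⌉` where `k` is the number of stable allocations at `P`. -/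
noncomputable def quantileIndex (M : Market D H X) (P : Profile D X) (q : ℝ) : ℕ :=
  ⌈(Set.ncard {Y : Finset X | IsStable M P Y} : ℝ) * q⌉₊

/-- `Z` is doctor `d`'s `⌈kq⌉`-th best outcome (according to `P d`) among the `k` stable
allocations at `P` : it is the outcome of some stable allocation, strictly fewer than
`⌈kq⌉` stable allocations give `d` a strictly better outcome, and at least `⌈kq⌉` stable
allocations give `d` a weakly better outcome. -/
def IsQuantileOutcome (M : Market D H X) (P : Profile D X) (q : ℝ) (d : D)
    (Z : Finset X) : Prop :=
  (∃ Y : Finset X, IsStable M P Y ∧ docPart M Y d = Z) ∧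
    Set.ncard {Y : Finset X | IsStable M P Y ∧ (P d).lt Z (docPart M Y d)} <
      quantileIndex M P q ∧
    quantileIndex M P q ≤
      Set.ncard {Y : Finset X | IsStable M P Y ∧ (P d).le Z (docPart M Y d)}

/-! ### Auxiliary machinery for the proof of `docOpt_worst_truth_best` -/

section Aux

variable {M : Market D H X}

lemma mem_allocs_iff {Y Z : Finset X} :
    Z ∈ allocs M Y ↔ Z ⊆ Y ∧ ∀ x ∈ Z, ∀ y ∈ Z, M.xD x = M.xD y → x = y := by
  simp [allocs, Finset.mem_filter, Finset.mem_powerset]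

lemma allocs_mono {Y W : Finset X} (h : Y ⊆ W) : allocs M Y ⊆ allocs M W := by
  intro Z hZ
  rw [mem_allocs_iff] at hZ ⊢
  exact ⟨hZ.1.trans h, hZ.2⟩

lemma mem_hospPart {Y : Finset X} {h : H} {x : X} :
    x ∈ hospPart M Y h ↔ x ∈ Y ∧ M.xH x = h := Finset.mem_filter

lemma mem_docPart {Y : Finset X} {d : D} {x : X} :
    x ∈ docPart M Y d ↔ x ∈ Y ∧ M.xD x = d := Finset.mem_filter

lemma docPart_mono {Y W : Finset X} {d : D} (h : Y ⊆ W) :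
    docPart M Y d ⊆ docPart M W d := Finset.filter_subset_filter _ h

lemma hospPart_mono {Y W : Finset X} {h : H} (hs : Y ⊆ W) :
    hospPart M Y h ⊆ hospPart M W h := Finset.filter_subset_filter _ hs

lemma pref_le_antisymm {pr : Pref X} {a b : Finset X} (h1 : pr.le a b)
    (h2 : pr.le b a) : a = b :=
  @le_antisymm _ pr.toPartialOrder a b h1 h2

lemma pref_le_trans {pr : Pref X} {a b c : Finset X} (h1 : pr.le a b)
    (h2 : pr.le b c) : pr.le a c :=
  @le_trans _ pr.toPartialOrder.toPreorder a b c h1 h2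

lemma pref_le_of_not_lt {pr : Pref X} {a b : Finset X} (h : ¬ pr.lt a b) :
    pr.le b a :=
  (@not_lt _ pr a b).1 h

lemma pref_not_lt_of_le {pr : Pref X} {a b : Finset X} (h : pr.le b a) :
    ¬ pr.lt a b :=
  (@not_lt _ pr a b).2 h

lemma pref_le_refl {pr : Pref X} (a : Finset X) : pr.le a a :=
  @le_refl _ pr.toPartialOrder.toPreorder a

lemma pref_lt_of_lt_of_le {pr : Pref X} {a b c : Finset X} (h1 : pr.lt a b)
    (h2 : pr.le b c) : pr.lt a c :=
  @lt_of_lt_of_le _ pr.toPartialOrder.toPreorder a b c h1 h2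

lemma bestAlloc_mem (pr : Pref X) (Y : Finset X) : bestAlloc M pr Y ∈ allocs M Y :=
  @Finset.max'_mem _ pr (allocs M Y) ⟨∅, empty_mem_allocs M Y⟩

lemma le_bestAlloc (pr : Pref X) {Y Z : Finset X} (h : Z ∈ allocs M Y) :
    pr.le Z (bestAlloc M pr Y) :=
  @Finset.le_max' _ pr _ _ h

lemma empty_le_bestAlloc (pr : Pref X) (Y : Finset X) :
    pr.le ∅ (bestAlloc M pr Y) :=
  le_bestAlloc pr (empty_mem_allocs M Y)

/-- the best allocation over a smaller family containing the best of the bigger family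
is the same. -/
lemma bestAlloc_eq_bestAlloc (pr : Pref X) {Y W : Finset X} (hYW : Y ⊆ W)
    (hmem : bestAlloc M pr W ∈ allocs M Y) : bestAlloc M pr Y = bestAlloc M pr W := by
  refine pref_le_antisymm (pr := pr) ?_ ?_
  · exact @Finset.le_max' _ pr _ _ (allocs_mono hYW (bestAlloc_mem pr Y))
  · exact @Finset.le_max' _ pr _ _ hmem

/-! #### Hospital choice -/

lemma Ch_subset_hospPart (h : H) (Y : Finset X) : Ch M h Y ⊆ hospPart M Y h :=
  (mem_allocs_iff.1 (bestAlloc_mem _ _)).1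

lemma mem_Ch_dest {h : H} {Y : Finset X} {x : X} (hx : x ∈ Ch M h Y) :
    x ∈ Y ∧ M.xH x = h :=
  mem_hospPart.1 (Ch_subset_hospPart h Y hx)

lemma Ch_alloc_prop {h : H} {Y : Finset X} :
    ∀ x ∈ Ch M h Y, ∀ y ∈ Ch M h Y, M.xD x = M.xD y → x = y :=
  (mem_allocs_iff.1 (bestAlloc_mem _ _)).2

lemma Ch_congr {h : H} {Y W : Finset X} (hp : hospPart M Y h = hospPart M W h) :
    Ch M h Y = Ch M h W := by
  unfold Ch
  rw [hp]

/-- Sandwich: if `hospPart Y ⊆ hospPart W` and the choice from `W` lies in `Y`,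
then the choices from `Y` and `W` agree. -/
lemma Ch_sandwich {h : H} {Y W : Finset X} (hp : hospPart M Y h ⊆ hospPart M W h)
    (hc : Ch M h W ⊆ Y) : Ch M h Y = Ch M h W := by
  unfold Ch
  refine bestAlloc_eq_bestAlloc _ hp ?_
  rw [mem_allocs_iff]
  refine ⟨?_, (mem_allocs_iff.1 (bestAlloc_mem _ _)).2⟩
  intro c hcmem
  have h1 := Ch_subset_hospPart h W hcmem
  exact mem_hospPart.2 ⟨hc hcmem, (mem_hospPart.1 h1).2⟩

/-- Irrelevance of rejected contracts. -/
lemma Ch_irc {h : H} {Z : Finset X} {x : X} (hx : x ∉ Ch M h (insert x Z)) :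
    Ch M h (insert x Z) = Ch M h Z := by
  refine (Ch_sandwich (hospPart_mono (Finset.subset_insert x Z)) ?_).symm
  intro c hc
  have := (mem_Ch_dest hc).1
  rcases Finset.mem_insert.1 this with rfl | h2
  · exact absurd hc hx
  · exact h2

/-! #### Doctor choice -/

lemma Cd_mem_allocs (pr : Pref X) (d : D) (Y : Finset X) :
    Cd M pr d Y ∈ allocs M (docPart M Y d) := bestAlloc_mem _ _

lemma allocs_docPart_cases {d : D} {Y Z : Finset X}
    (h : Z ∈ allocs M (docPart M Y d)) :
    Z = ∅ ∨ ∃ x, Z = {x} ∧ x ∈ Y ∧ M.xD x = d := by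
  rw [mem_allocs_iff] at h
  rcases Z.eq_empty_or_nonempty with rfl | ⟨x, hx⟩
  · exact Or.inl rfl
  · refine Or.inr ⟨x, ?_, (mem_docPart.1 (h.1 hx)).1, (mem_docPart.1 (h.1 hx)).2⟩
    apply Finset.eq_singleton_iff_unique_mem.2 ⟨hx, ?_⟩
    intro y hy
    apply h.2 y hy x hx
    rw [(mem_docPart.1 (h.1 hy)).2, (mem_docPart.1 (h.1 hx)).2]

lemma singleton_mem_allocs_docPart {d : D} {Y : Finset X} {x : X}
    (hx : x ∈ Y) (hd : M.xD x = d) : {x} ∈ allocs M (docPart M Y d) := by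
  rw [mem_allocs_iff]
  constructor
  · intro c hc
    rw [Finset.mem_singleton] at hc
    subst hc
    exact mem_docPart.2 ⟨hx, hd⟩
  · intro a ha b hb _
    rw [Finset.mem_singleton] at ha hb
    rw [ha, hb]

lemma le_Cd (pr : Pref X) {d : D} {Y Z : Finset X}
    (h : Z ∈ allocs M (docPart M Y d)) : pr.le Z (Cd M pr d Y) :=
  le_bestAlloc pr h

lemma empty_le_Cd (pr : Pref X) (d : D) (Y : Finset X) : pr.le ∅ (Cd M pr d Y) :=
  empty_le_bestAlloc pr _

lemma mem_Cd_dest {pr : Pref X} {d : D} {Y : Finset X} {c : X}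
    (hc : c ∈ Cd M pr d Y) : c ∈ Y ∧ M.xD c = d := by
  have := (mem_allocs_iff.1 (Cd_mem_allocs pr d Y)).1 hc
  exact mem_docPart.1 this

lemma Cd_eq_singleton_of_mem {pr : Pref X} {d : D} {Y : Finset X} {c : X}
    (hc : c ∈ Cd M pr d Y) : Cd M pr d Y = {c} := by
  rcases allocs_docPart_cases (Cd_mem_allocs (M := M) pr d Y) with h | ⟨x, hx, _, _⟩
  · rw [h] at hc; exact absurd hc (Finset.notMem_empty c)
  · rw [hx] at hc ⊢
    rw [Finset.mem_singleton] at hc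
    rw [hc]

/-- a chosen contract remains chosen when the available set shrinks around it. -/
lemma Cd_shrink {pr : Pref X} {d : D} {Y' Y : Finset X} {c : X} (hsub : Y' ⊆ Y)
    (hc : c ∈ Cd M pr d Y) (hc' : c ∈ Y') : Cd M pr d Y' = {c} := by
  have h1 : Cd M pr d Y = {c} := Cd_eq_singleton_of_mem hc
  have h2 : ({c} : Finset X) ∈ allocs M (docPart M Y' d) :=
    singleton_mem_allocs_docPart hc' (mem_Cd_dest hc).2
  refine pref_le_antisymm (pr := pr) ?_ (@Finset.le_max' _ pr _ _ h2)
  have h3 : Cd M pr d Y' ∈ allocs M (docPart M Y d) :=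
    allocs_mono (docPart_mono hsub) (Cd_mem_allocs pr d Y')
  have h4 := le_Cd pr h3
  rw [h1] at h4
  exact h4

/-! #### Union choices -/

lemma docPart_CD (P : Profile D X) (Y : Finset X) (d : D) :
    docPart M (CD M P Y) d = Cd M (P d) d Y := by
  ext c
  rw [mem_docPart]
  constructor
  · rintro ⟨hc, hd⟩
    rw [CD, Finset.mem_biUnion] at hc
    rcases hc with ⟨j, _, hj⟩
    have hjd : j = d := ((mem_Cd_dest hj).2).symm.trans hd
    rw [hjd] at hj
    exact hj
  · intro hc
    refine ⟨Finset.mem_biUnion.2 ⟨d, Finset.mem_univ d, hc⟩, (mem_Cd_dest hc).2⟩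

lemma CD_subset (P : Profile D X) (Y : Finset X) : CD M P Y ⊆ Y := by
  intro c hc
  rw [CD, Finset.mem_biUnion] at hc
  rcases hc with ⟨j, _, hj⟩
  exact (mem_Cd_dest hj).1

lemma mem_CD_dest {P : Profile D X} {Y : Finset X} {c : X} (hc : c ∈ CD M P Y) :
    c ∈ Cd M (P (M.xD c)) (M.xD c) Y := by
  have : c ∈ docPart M (CD M P Y) (M.xD c) := mem_docPart.2 ⟨hc, rfl⟩
  rw [docPart_CD] at this
  exact this

lemma mem_CH_iff {Y : Finset X} {c : X} : c ∈ CH M Y ↔ c ∈ Ch M (M.xH c) Y := by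
  constructor
  · intro hc
    rw [CH, Finset.mem_biUnion] at hc
    rcases hc with ⟨h, _, hh⟩
    have hch : h = M.xH c := (mem_Ch_dest hh).2.symm
    rwa [← hch]
  · intro hc
    exact Finset.mem_biUnion.2 ⟨M.xH c, Finset.mem_univ _, hc⟩

lemma CH_subset (Y : Finset X) : CH M Y ⊆ Y := by
  intro c hc
  exact (mem_Ch_dest (mem_CH_iff.1 hc)).1

/-! #### Run lemmas -/

lemma Ch_subset_CH (h : H) (Y : Finset X) : Ch M h Y ⊆ CH M Y := fun _c hc =>
  Finset.mem_biUnion.2 ⟨h, Finset.mem_univ _, hc⟩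

variable (P : Profile D X)

lemma DDAsets_zero : DDAsets M P 0 = Finset.univ := rfl

lemma DDAsets_succ_def (t : ℕ) :
    DDAsets M P (t + 1)
      = DDAsets M P t \ (offers M P t \ CH M (offers M P t)) := rfl

lemma offers_subset (t : ℕ) : offers M P t ⊆ DDAsets M P t := CD_subset _ _

lemma DDAsets_succ_subset (t : ℕ) : DDAsets M P (t + 1) ⊆ DDAsets M P t :=
  Finset.sdiff_subset

lemma mem_DDAsets_succ {t : ℕ} {x : X} (hx : x ∈ DDAsets M P t)
    (hO : x ∈ CH M (offers M P t) ∨ x ∉ offers M P t) : x ∈ DDAsets M P (t + 1) := by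
  rw [DDAsets_succ_def, Finset.mem_sdiff, Finset.mem_sdiff]
  refine ⟨hx, ?_⟩
  rintro ⟨h1, h2⟩
  rcases hO with h | h
  · exact h2 h
  · exact h h1

lemma rejected_dest {t : ℕ} {x : X} (hx : x ∈ DDAsets M P t)
    (hx' : x ∉ DDAsets M P (t + 1)) :
    x ∈ offers M P t ∧ x ∉ CH M (offers M P t) := by
  rw [DDAsets_succ_def, Finset.mem_sdiff] at hx'
  push_neg at hx'
  exact Finset.mem_sdiff.1 (hx' hx)

lemma held_persist (t : ℕ) : CH M (offers M P t) ⊆ offers M P (t + 1) := by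
  intro c hc
  have hcO : c ∈ offers M P t := CH_subset _ hc
  have hcd := mem_CD_dest hcO
  have hcX1 : c ∈ DDAsets M P (t + 1) :=
    mem_DDAsets_succ P (offers_subset P t hcO) (Or.inl hc)
  have h1 := Cd_shrink (DDAsets_succ_subset P t) hcd hcX1
  refine Finset.mem_biUnion.2 ⟨M.xD c, Finset.mem_univ _, ?_⟩
  rw [h1]
  exact Finset.mem_singleton_self c

lemma stopped_step {t : ℕ} (h : DDAstopped M P t) :
    DDAsets M P (t + 1) = DDAsets M P t ∧ DDAstopped M P (t + 1) := by
  have h1 : DDAsets M P (t + 1) = DDAsets M P t := by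
    rw [DDAsets_succ_def, DDAstopped] at *
    rw [h, Finset.sdiff_self, Finset.sdiff_empty]
  refine ⟨h1, ?_⟩
  rw [DDAstopped] at h ⊢
  unfold offers at h ⊢
  rw [h1]
  exact h

lemma stopped_mono {t s : ℕ} (hts : t ≤ s) (h : DDAstopped M P t) :
    DDAstopped M P s := by
  induction s, hts using Nat.le_induction with
  | base => exact h
  | succ n _ ih => exact (stopped_step P ih).2

lemma CD_empty : CD M P ∅ = ∅ := Finset.subset_empty.1 (CD_subset P ∅)

lemma stopped_card : DDAstopped M P (Fintype.card X) := by
  have key : ∀ n : ℕ, (∃ t ≤ n, DDAstopped M P t) ∨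
      (DDAsets M P n).card + n ≤ Fintype.card X := by
    intro n
    induction n with
    | zero =>
      right
      rw [DDAsets_zero]
      simp [Finset.card_univ]
    | succ n ih =>
      rcases ih with ⟨t, ht, h⟩ | h
      · exact Or.inl ⟨t, ht.trans n.le_succ, h⟩
      · by_cases hst : DDAstopped M P n
        · exact Or.inl ⟨n, n.le_succ, hst⟩
        · right
          have hne : CH M (offers M P n) ≠ offers M P n := hst
          have hsub2 : CH M (offers M P n) ⊆ offers M P n := CH_subset _
          obtain ⟨y, hyO, hyC⟩ := Finset.exists_of_ssubset (hsub2.ssubset_of_ne hne)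
          have hy1 : y ∈ DDAsets M P n := offers_subset P n hyO
          have hy2 : y ∉ DDAsets M P (n + 1) := by
            rw [DDAsets_succ_def, Finset.mem_sdiff]
            push_neg
            intro _
            exact Finset.mem_sdiff.2 ⟨hyO, hyC⟩
          have hcard : (DDAsets M P (n + 1)).card < (DDAsets M P n).card :=
            Finset.card_lt_card ⟨DDAsets_succ_subset P n, fun hcon => hy2 (hcon hy1)⟩
          omega
  rcases key (Fintype.card X) with ⟨t, ht, h⟩ | h
  · exact stopped_mono P ht h
  · have h0 : DDAsets M P (Fintype.card X) = ∅ := by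
      rw [← Finset.card_eq_zero]
      omega
    rw [DDAstopped]
    unfold offers
    rw [h0, CD_empty]
    ext c
    simp only [Finset.notMem_empty, iff_false]
    intro hc
    exact absurd (CH_subset (M := M) ∅ hc) (Finset.notMem_empty c)

lemma DDAoutput_eq : DDAoutput M P = offers M P (Fintype.card X) := stopped_card P

lemma docOpt_eq (d : D) :
    docOpt M P d = Cd M (P d) d (DDAsets M P (Fintype.card X)) := by
  unfold docOpt
  rw [DDAoutput_eq]
  exact docPart_CD P _ d

/-- Key invariant: a contract that has been rejected would not be chosen by its
hospital even if re-inserted into the current offers. -/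
lemma run_invariant (hsub : ∀ h : H, Substitutable M h) :
    ∀ t : ℕ, ∀ x : X, x ∉ DDAsets M P t →
      x ∉ Ch M (M.xH x) (insert x (offers M P t)) := by
  intro t
  induction t with
  | zero => exact fun x hx => absurd (Finset.mem_univ x) hx
  | succ t ih =>
    intro x hx
    have hbase : x ∉ Ch M (M.xH x) (insert x (offers M P t)) := by
      by_cases hxt : x ∈ DDAsets M P t
      · obtain ⟨hO, hCH⟩ := rejected_dest P hxt hx
        rw [Finset.insert_eq_self.2 hO]
        intro hc
        exact hCH (mem_CH_iff.2 hc)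
      · exact ih x hxt
    have hirc : Ch M (M.xH x) (insert x (offers M P t))
        = Ch M (M.xH x) (offers M P t) := Ch_irc hbase
    have hSsub : Ch M (M.xH x) (offers M P t) ⊆ offers M P t :=
      fun _c hc => (mem_Ch_dest hc).1
    have hnotS : x ∉ Ch M (M.xH x) (offers M P t) := by
      rw [← hirc]; exact hbase
    have hsw : Ch M (M.xH x) (insert x (Ch M (M.xH x) (offers M P t)))
        = Ch M (M.xH x) (offers M P t) := by
      refine (Ch_sandwich ?_ ?_).trans hirc
      · exact hospPart_mono (Finset.insert_subset_insert _ hSsub)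
      · rw [hirc]
        exact Finset.subset_insert _ _
    intro hcon
    have hS1 : Ch M (M.xH x) (offers M P t) ⊆ offers M P (t + 1) :=
      Finset.Subset.trans (Ch_subset_CH _ _) (held_persist P t)
    have hsub' : hospPart M (insert x (Ch M (M.xH x) (offers M P t))) (M.xH x)
        ⊆ hospPart M (insert x (offers M P (t + 1))) (M.xH x) :=
      hospPart_mono (Finset.insert_subset_insert _ hS1)
    have hx' : x ∈ hospPart M (insert x (Ch M (M.xH x) (offers M P t))) (M.xH x) :=
      mem_hospPart.2 ⟨Finset.mem_insert_self _ _, rfl⟩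
    have hres := hsub (M.xH x) _ _ hsub' x hx' hcon
    rw [hsw] at hres
    exact hnotS hres

/-! #### Constructed preferences -/

/-- A linear order on `Finset X` ranking sets first by a numeric tag (higher is
better) and breaking ties by `pr`. -/
noncomputable def lexPref (pr : Pref X) (tag : Finset X → ℕ) : Pref X :=
  @LinearOrder.lift' (Finset X) (ℕ ×ₗ Finset X)
    (@Prod.Lex.instLinearOrder ℕ (Finset X) _ pr)
    (fun S => toLex (tag S, S))
    (fun a b hab => by
      have := congrArg (fun p => (ofLex p).2) hab
      simpa using this)

lemma lexPref_le_iff {pr : Pref X} {tag : Finset X → ℕ} {S T : Finset X} :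
    (lexPref pr tag).le S T ↔ tag S < tag T ∨ (tag S = tag T ∧ pr.le S T) :=
  @Prod.Lex.le_iff ℕ (Finset X) _
    (@Preorder.toLE _ (@PartialOrder.toPreorder _ pr.toPartialOrder)) (tag S, S) (tag T, T)

lemma Cd_eq_of_max {pr : Pref X} {d : D} {Y Z : Finset X}
    (hZ : Z ∈ allocs M (docPart M Y d))
    (hmax : ∀ W ∈ allocs M (docPart M Y d), pr.le W Z) : Cd M pr d Y = Z :=
  pref_le_antisymm (hmax _ (Cd_mem_allocs (M := M) pr d Y)) (le_Cd pr hZ)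

/-- If `∅` has tag `1` and every available singleton has tag `0`, the choice is `∅`. -/
lemma Cd_lexPref_eq_empty {pr : Pref X} {tag : Finset X → ℕ} {d : D} {Y : Finset X}
    (h0 : tag ∅ = 1) (hsing : ∀ x ∈ Y, M.xD x = d → tag {x} = 0) :
    Cd M (lexPref pr tag) d Y = ∅ := by
  refine Cd_eq_of_max (empty_mem_allocs M _) ?_
  intro W hW
  rcases allocs_docPart_cases hW with rfl | ⟨x, rfl, hxY, hxd⟩
  · rw [lexPref_le_iff]
    exact Or.inr ⟨rfl, pref_le_refl _⟩
  · rw [lexPref_le_iff, h0, hsing x hxY hxd]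
    exact Or.inl one_pos

/-- If `{c}` is available with top tag `2`, all tags are at most `2`, `∅` has a smaller
tag, and `{c}` is `pr`-maximal among available tag-`2` singletons, then the choice
is `{c}`. -/
lemma Cd_lexPref_eq_top {pr : Pref X} {tag : Finset X → ℕ} {d : D} {Y : Finset X}
    {c : X} (hc : c ∈ Y) (hcd : M.xD c = d) (htop : tag {c} = 2)
    (h0 : tag ∅ < 2) (hle2 : ∀ x ∈ Y, M.xD x = d → tag {x} ≤ 2)
    (hother : ∀ x ∈ Y, M.xD x = d → tag {x} = 2 → pr.le {x} {c}) :
    Cd M (lexPref pr tag) d Y = {c} := by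
  refine Cd_eq_of_max (singleton_mem_allocs_docPart hc hcd) ?_
  intro W hW
  rcases allocs_docPart_cases hW with rfl | ⟨x, rfl, hxY, hxd⟩
  · rw [lexPref_le_iff, htop]
    exact Or.inl h0
  · rw [lexPref_le_iff, htop]
    rcases Nat.lt_or_ge (tag {x}) 2 with h | h
    · exact Or.inl h
    · have h2 : tag {x} = 2 := le_antisymm (hle2 x hxY hxd) h
      exact Or.inr ⟨h2, hother x hxY hxd h2⟩

lemma not_lexPref_le_of_tag_lt {pr : Pref X} {tag : Finset X → ℕ} {S T : Finset X}
    (h : tag T < tag S) : ¬ (lexPref pr tag).le S T := by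
  rw [lexPref_le_iff]
  rintro (h1 | ⟨h1, -⟩) <;> omega

/-! #### worstIn facts -/

lemma worstIn_mem (pr : Pref X) {S : Set (Finset X)} (h : S.Nonempty) :
    worstIn pr S ∈ S := by
  rw [worstIn, dif_pos h]
  have := @Finset.min'_mem _ pr (Set.toFinite S).toFinset
    ((Set.Finite.toFinset_nonempty _).mpr h)
  rwa [Set.Finite.mem_toFinset] at this

lemma worstIn_le (pr : Pref X) {S : Set (Finset X)} {Z : Finset X} (hZ : Z ∈ S) :
    pr.le (worstIn pr S) Z := by
  have h : S.Nonempty := ⟨Z, hZ⟩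
  rw [worstIn, dif_pos h]
  exact @Finset.min'_le _ pr _ _ ((Set.Finite.mem_toFinset _).2 hZ)

/-! #### The adversary extracted from a truncation run -/

lemma CD_alloc {P : Profile D X} {Y : Finset X} :
    ∀ x ∈ CD M P Y, ∀ y ∈ CD M P Y, M.xD x = M.xD y → x = y := by
  intro x hx y hy hxy
  have hx' := mem_CD_dest hx
  have hy' := mem_CD_dest hy
  rw [hxy] at hx'
  have := Cd_eq_singleton_of_mem hy'
  rw [this, Finset.mem_singleton] at hx'
  exact hx'

lemma pref_lt_irrefl {pr : Pref X} (a : Finset X) : ¬ pr.lt a a :=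
  @lt_irrefl _ pr.toPartialOrder.toPreorder a

end Aux

section Tags

variable {M : Market D H X}

open scoped Classical in
/-- Tag for the truncation of `pr` strictly above `z` (on `d`'s contracts). -/
noncomputable def truncTag (M : Market D H X) (d : D) (pr : Pref X) (z : Finset X)
    (S : Finset X) : ℕ :=
  if ∃ x, S = {x} ∧ M.xD x = d ∧ pr.lt z {x} then 2 else if S = ∅ then 1 else 0

lemma truncTag_empty {d : D} {pr : Pref X} {z : Finset X} :
    truncTag M d pr z ∅ = 1 := by
  rw [truncTag, if_neg, if_pos rfl]
  rintro ⟨x, hx, -, -⟩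
  exact (Finset.singleton_ne_empty x) hx.symm

lemma truncTag_le2 {d : D} {pr : Pref X} {z S : Finset X} :
    truncTag M d pr z S ≤ 2 := by
  rw [truncTag]
  split_ifs <;> omega

lemma truncTag_singleton_pos {d : D} {pr : Pref X} {z : Finset X} {x : X}
    (hd : M.xD x = d) (hlt : pr.lt z {x}) : truncTag M d pr z {x} = 2 := by
  rw [truncTag, if_pos ⟨x, rfl, hd, hlt⟩]

lemma truncTag_singleton_zero {d : D} {pr : Pref X} {z : Finset X} {x : X}
    (h : ¬ (M.xD x = d ∧ pr.lt z {x})) : truncTag M d pr z {x} = 0 := by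
  rw [truncTag, if_neg, if_neg (Finset.singleton_ne_empty x)]
  rintro ⟨x', hx', hx'd, hx'z⟩
  have : x' = x := Finset.singleton_inj.1 hx'.symm
  rw [this] at hx'd hx'z
  exact h ⟨hx'd, hx'z⟩

lemma truncTag_singleton_dest {d : D} {pr : Pref X} {z : Finset X} {x : X}
    (h : truncTag M d pr z {x} = 2) : M.xD x = d ∧ pr.lt z {x} := by
  by_contra hcon
  rw [truncTag_singleton_zero hcon] at h
  omega

/-- Tag for a single-minded preference whose unique acceptable outcome is `Bj`. -/
def singleTag (Bj S : Finset X) : ℕ :=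
  if S = Bj ∧ S ≠ ∅ then 2 else if S = ∅ then 1 else 0

lemma singleTag_empty {Bj : Finset X} : singleTag Bj ∅ = 1 := by
  rw [singleTag, if_neg, if_pos rfl]
  rintro ⟨-, h⟩
  exact h rfl

lemma singleTag_le2 {Bj S : Finset X} : singleTag Bj S ≤ 2 := by
  rw [singleTag]
  split_ifs <;> omega

lemma singleTag_self {Bj : Finset X} (h : Bj ≠ ∅) : singleTag Bj Bj = 2 := by
  rw [singleTag, if_pos ⟨rfl, h⟩]

lemma singleTag_other {Bj S : Finset X} (h1 : S ≠ Bj) (h2 : S ≠ ∅) :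
    singleTag Bj S = 0 := by
  rw [singleTag, if_neg, if_neg h2]
  rintro ⟨h, -⟩
  exact h1 h

lemma singleTag_eq2_dest {Bj S : Finset X} (h : singleTag Bj S = 2) : S = Bj := by
  by_contra hcon
  by_cases h2 : S = ∅
  · rw [h2, singleTag_empty] at h; omega
  · rw [singleTag_other hcon h2] at h; omega

end Tags

section Aux2

variable {M : Market D H X}

/-- From any run at a profile `P₀`, extract a single-list adversary `B` (an allocation
of contracts of doctors other than `d`) such that every contract of `d` strictly better
than `d`'s outcome in that run is rejected by its hospital even against `B` alone. -/
lemma exists_blocker_set (hsub : ∀ h : H, Substitutable M h) (P₀ : Profile D X)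
    (d : D) :
    ∃ B : Finset X, docPart M B d = ∅ ∧
      (∀ x ∈ B, ∀ y ∈ B, M.xD x = M.xD y → x = y) ∧
      ∀ x : X, M.xD x = d → (P₀ d).lt (docOpt M P₀ d) {x} →
        x ∉ Ch M (M.xH x) (insert x B) := by
  set T := Fintype.card X with hT
  obtain ⟨Pd, hPd⟩ : ∃ pr : Pref X, P₀ d = pr := ⟨P₀ d, rfl⟩
  obtain ⟨z, hz⟩ : ∃ z : Finset X, docOpt M P₀ d = z := ⟨_, rfl⟩
  have hzCd : z = Cd M Pd d (DDAsets M P₀ T) := by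
    rw [← hz, ← hPd]
    exact docOpt_eq P₀ d
  set P₁ : Profile D X := Function.update P₀ d (lexPref Pd (truncTag M d Pd z))
    with hP₁
  have hP₁d : P₁ d = lexPref Pd (truncTag M d Pd z) := Function.update_self d _ P₀
  have hP₁j : ∀ j : D, j ≠ d → P₁ j = P₀ j := fun j hj =>
    Function.update_of_ne hj _ P₀
  -- the coupling invariant
  have INV : ∀ t : ℕ, DDAsets M P₁ t = DDAsets M P₀ t ∨
      ∀ a : X, M.xD a = d → Pd.lt z {a} → a ∉ DDAsets M P₁ t := by
    intro t
    induction t with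
    | zero => exact Or.inl rfl
    | succ t ih =>
      rcases ih with heq | hrej
      · by_cases hA : ∃ a ∈ DDAsets M P₁ t, M.xD a = d ∧ Pd.lt z {a}
        · obtain ⟨a, haX, had, haz⟩ := hA
          left
          have hoff : offers M P₁ t = offers M P₀ t := by
            unfold offers CD
            rw [heq]
            refine Finset.biUnion_congr rfl ?_
            intro j _
            by_cases hj : j = d
            · rw [hj, hP₁d, hPd]
              have haX' : a ∈ DDAsets M P₀ t := heq ▸ haX
              have hle_a : Pd.le {a} (Cd M Pd d (DDAsets M P₀ t)) :=
                le_Cd Pd (singleton_mem_allocs_docPart haX' had)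
              rcases allocs_docPart_cases
                  (Cd_mem_allocs (M := M) Pd d (DDAsets M P₀ t)) with hm |
                    ⟨x₀, hm, hx₀X, hx₀d⟩
              · exfalso
                rw [hm] at hle_a
                have h1 : Pd.le ∅ z := hzCd ▸ empty_le_Cd Pd d _
                exact pref_lt_irrefl z
                  (pref_lt_of_lt_of_le (pref_lt_of_lt_of_le haz hle_a) h1)
              · have hx₀z : Pd.lt z {x₀} :=
                  pref_lt_of_lt_of_le haz (hm ▸ hle_a)
                rw [hm]
                refine Cd_lexPref_eq_top hx₀X hx₀d
                  (truncTag_singleton_pos hx₀d hx₀z) ?_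
                  (fun S _ _ => truncTag_le2) ?_
                · rw [truncTag_empty]; omega
                · intro y hyX hyd _
                  have h2 := le_Cd (M := M) Pd (singleton_mem_allocs_docPart hyX hyd)
                  rw [hm] at h2
                  exact h2
            · rw [hP₁j j hj]
          rw [DDAsets_succ_def, DDAsets_succ_def, heq, hoff]
        · right
          intro a had haz hcon
          exact hA ⟨a, DDAsets_succ_subset P₁ t hcon, had, haz⟩
      · right
        intro a had haz hcon
        exact hrej a had haz (DDAsets_succ_subset P₁ t hcon)
  -- at the final time every strictly-better contract of `d` has been rejected
  have hrejT : ∀ a : X, M.xD a = d → Pd.lt z {a} → a ∉ DDAsets M P₁ T := by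
    rcases INV T with heq | hrej
    · intro a had haz hcon
      rw [heq] at hcon
      have h3 : Pd.le {a} z :=
        hzCd ▸ le_Cd Pd (singleton_mem_allocs_docPart hcon had)
      exact pref_not_lt_of_le h3 haz
    · exact hrej
  refine ⟨offers M P₁ T, ?_, CD_alloc, ?_⟩
  · rw [offers, docPart_CD, hP₁d]
    refine Cd_lexPref_eq_empty truncTag_empty ?_
    intro x hxX hxd
    refine truncTag_singleton_zero ?_
    rintro ⟨-, hxz⟩
    exact hrejT x hxd hxz hxX
  · intro x hxd hxz
    rw [hPd] at hxz
    rw [hz] at hxz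
    exact run_invariant P₁ hsub T x (hrejT x hxd hxz)

/-! #### The punishment run -/

lemma Ch_union_rejected (hsub : ∀ h : H, Substitutable M h) {h : H} {W : Finset X}
    (R : Finset X)
    (hR : ∀ y ∈ R, M.xH y = h ∧ y ∉ W ∧ y ∉ Ch M h (insert y W)) :
    Ch M h (W ∪ R) = Ch M h W := by
  induction R using Finset.induction_on with
  | empty => rw [Finset.union_empty]
  | @insert y R' hyR' ih =>
    have hy := hR y (Finset.mem_insert_self y R')
    rw [Finset.union_insert]
    have hynot : y ∉ Ch M h (insert y (W ∪ R')) := by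
      intro hcon
      have hsubp : hospPart M (insert y W) h ⊆ hospPart M (insert y (W ∪ R')) h :=
        hospPart_mono (Finset.insert_subset_insert _ Finset.subset_union_left)
      have hymem : y ∈ hospPart M (insert y W) h :=
        mem_hospPart.2 ⟨Finset.mem_insert_self _ _, hy.1⟩
      exact hy.2.2 (hsub h _ _ hsubp y hymem hcon)
    rw [Ch_irc hynot]
    exact ih (fun y' hy' => hR y' (Finset.mem_insert_of_mem hy'))

lemma exists_outcome_in_acc (hsub : ∀ h : H, Substitutable M h) (P'd : Pref X)
    (d : D) {B : Finset X} (hBd : docPart M B d = ∅)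
    (hBalloc : ∀ x ∈ B, ∀ y ∈ B, M.xD x = M.xD y → x = y) :
    ∃ P : Profile D X, P d = P'd ∧
      (docOpt M P d = ∅ ∨ ∃ x, docOpt M P d = {x} ∧ M.xD x = d ∧
        x ∈ Ch M (M.xH x) (insert x B)) := by
  set T := Fintype.card X with hT
  obtain ⟨P, hPdef⟩ : ∃ P : Profile D X, P = fun j => if j = d then P'd
      else lexPref P'd (singleTag (docPart M B j)) := ⟨_, rfl⟩
  have hPd : P d = P'd := by rw [hPdef]; exact if_pos rfl
  have hPj : ∀ j, j ≠ d → P j = lexPref P'd (singleTag (docPart M B j)) := by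
    intro j hj; rw [hPdef]; exact if_neg hj
  refine ⟨P, hPd, ?_⟩
  have hstop : CH M (offers M P T) = offers M P T := stopped_card P
  have g2 : ∀ y ∈ B, y ∉ offers M P T → y ∉ DDAsets M P T := by
    intro y hyB hyO hyX
    have hyd : M.xD y ≠ d := by
      intro he
      have h1 : y ∈ docPart M B d := mem_docPart.2 ⟨hyB, he⟩
      rw [hBd] at h1
      exact absurd h1 (Finset.notMem_empty y)
    have hdoc : docPart M B (M.xD y) = {y} := by
      refine Finset.eq_singleton_iff_unique_mem.2 ⟨mem_docPart.2 ⟨hyB, rfl⟩, ?_⟩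
      intro w hw
      exact hBalloc w (mem_docPart.1 hw).1 y hyB (mem_docPart.1 hw).2
    have hCd : Cd M (P (M.xD y)) (M.xD y) (DDAsets M P T) = {y} := by
      rw [hPj _ hyd]
      refine Cd_lexPref_eq_top hyX rfl ?_ ?_ (fun S _ _ => singleTag_le2) ?_
      · rw [hdoc]
        exact singleTag_self (Finset.singleton_ne_empty y)
      · rw [singleTag_empty]; omega
      · intro x hxX hxd htag2
        have h2 := singleTag_eq2_dest htag2
        rw [hdoc] at h2
        rw [h2]
        exact pref_le_refl _
    apply hyO
    refine Finset.mem_biUnion.2 ⟨M.xD y, Finset.mem_univ _, ?_⟩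
    rw [hCd]
    exact Finset.mem_singleton_self y
  have hout : docOpt M P d = Cd M P'd d (DDAsets M P T) := by
    rw [docOpt_eq, hPd]
  rcases allocs_docPart_cases (M := M)
      (Cd_mem_allocs (M := M) P'd d (DDAsets M P T)) with h0 | ⟨x, hx, hxX, hxd⟩
  · exact Or.inl (by rw [hout, h0])
  · refine Or.inr ⟨x, by rw [hout, hx], hxd, ?_⟩
    have hxO : x ∈ offers M P T := by
      have h1 : x ∈ Cd M (P d) d (DDAsets M P T) := by
        rw [hPd, hx]
        exact Finset.mem_singleton_self x
      exact Finset.mem_biUnion.2 ⟨d, Finset.mem_univ _, h1⟩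
    have hx1 : x ∈ Ch M (M.xH x) (offers M P T) := by
      have h1 : x ∈ CH M (offers M P T) := by rw [hstop]; exact hxO
      exact mem_CH_iff.1 h1
    have hRprop : ∀ y ∈ hospPart M B (M.xH x) \ offers M P T,
        M.xH y = M.xH x ∧ y ∉ offers M P T ∧
          y ∉ Ch M (M.xH x) (insert y (offers M P T)) := by
      intro y hy
      rw [Finset.mem_sdiff, mem_hospPart] at hy
      obtain ⟨⟨hyB, hyh⟩, hyO⟩ := hy
      refine ⟨hyh, hyO, ?_⟩
      have hyX := g2 y hyB hyO
      have h2 := run_invariant P hsub T y hyX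
      rw [hyh] at h2
      exact h2
    have hCh := Ch_union_rejected hsub (hospPart M B (M.xH x) \ offers M P T) hRprop
    have hx2 : x ∈ Ch M (M.xH x)
        (offers M P T ∪ (hospPart M B (M.xH x) \ offers M P T)) := by
      rw [hCh]
      exact hx1
    refine hsub (M.xH x) _ _ ?_ x ?_ hx2
    · intro c hc
      rw [mem_hospPart] at hc ⊢
      obtain ⟨hcmem, hch⟩ := hc
      rcases Finset.mem_insert.1 hcmem with rfl | hcB
      · exact ⟨Finset.mem_union_left _ hxO, hch⟩
      · by_cases hcW : c ∈ offers M P T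
        · exact ⟨Finset.mem_union_left _ hcW, hch⟩
        · exact ⟨Finset.mem_union_right _
            (Finset.mem_sdiff.2 ⟨mem_hospPart.2 ⟨hcB, hch⟩, hcW⟩), hch⟩
    · exact mem_hospPart.2 ⟨Finset.mem_insert_self _ _, rfl⟩

end Aux2


/-- Under substitutability, for the doctor-optimal rule, truth-telling maximizes the
worst-case outcome: `W_d(P_d, O^{φ̄}(P_d)) R_d W_d(P_d, O^{φ̄}(P'_d))` for all `P'_d`. -/
theorem docOpt_worst_truth_best (M : Market D H X) (hsub : ∀ h : H, Substitutable M h) :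
    ∀ (d : D) (Pd P'd : Pref X),
      Pd.le (worstIn Pd (optionSet (docOpt M) d P'd))
        (worstIn Pd (optionSet (docOpt M) d Pd)) := by
  intro d Pd P'd
  have hne : (optionSet (docOpt M) d Pd).Nonempty :=
    ⟨docOpt M (fun _ => Pd) d, fun _ => Pd, rfl, rfl⟩
  obtain ⟨Pstar, hPstard, hmu⟩ := worstIn_mem Pd hne
  obtain ⟨B, hBd, hBalloc, hB⟩ := exists_blocker_set hsub Pstar d
  obtain ⟨Phat, hPhatd, hout⟩ := exists_outcome_in_acc hsub P'd d hBd hBalloc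
  have hmem' : docOpt M Phat d ∈ optionSet (docOpt M) d P'd := ⟨Phat, hPhatd, rfl⟩
  have hle1 : Pd.le (worstIn Pd (optionSet (docOpt M) d P'd)) (docOpt M Phat d) :=
    worstIn_le Pd hmem'
  have hemp : Pd.le ∅ (docOpt M Pstar d) := by
    rw [docOpt_eq, hPstard]
    exact empty_le_Cd Pd d _
  have hle2 : Pd.le (docOpt M Phat d) (worstIn Pd (optionSet (docOpt M) d Pd)) := by
    rw [hmu]
    rcases hout with h0 | ⟨x, hx, hxd, hxch⟩
    · rw [h0]
      exact hemp
    · rw [hx]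
      refine pref_le_of_not_lt ?_
      intro hlt
      refine hB x hxd ?_ hxch
      rw [hPstard]
      exact hlt
  exact pref_le_trans hle1 hle2

end Matching
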